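/- Let X ∈ S_n and suppose G ∈ 𝕊^n satisfies λ_{n-1}(G) − λ_n(G) ≥ δ_X > 0. Let v_n be a unit eigenvector of G associated with λ_n(G). Then ⟨X − v_n v_nᵀ, G⟩ ≥ δ_X (1 − v_nᵀ X v_n) ≥ (δ_X/2) ‖X − v_n v_nᵀ‖_F². -/

import Mathlib

open Matrix
open scoped RealInnerProductSpace

noncomputable section

/-- Trace (Frobenius) inner product on real square matrices. -/
def tinner {n : ℕ} (A B : Matrix (Fin n) (Fin n) ℝ) : ℝ := ∑ i, ∑ j, A i j * B i j

/-- Squared Frobenius norm. -/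
def frobSq {n : ℕ} (A : Matrix (Fin n) (Fin n) ℝ) : ℝ := ∑ i, ∑ j, (A i j)^2

/-- Frobenius norm. -/
def frobNorm {n : ℕ} (A : Matrix (Fin n) (Fin n) ℝ) : ℝ := Real.sqrt (frobSq A)

/-- The spectrahedron: positive semidefinite matrices with unit trace. -/
def Spectra (n : ℕ) : Set (Matrix (Fin n) (Fin n) ℝ) :=
  {X | X.PosSemidef ∧ X.trace = 1}

/-- Eigenvalues of a symmetric matrix sorted in non-decreasing order, so that
`sortedEigs hA 0` is the smallest eigenvalue (λ_n in the paper's non-increasing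
convention), `sortedEigs hA 1` is the second smallest (λ_{n-1}), and in general
`sortedEigs hA i = λ_{n-i}`. -/
def sortedEigs {n : ℕ} {A : Matrix (Fin n) (Fin n) ℝ} (hA : A.IsHermitian) : Fin n → ℝ :=
  hA.eigenvalues ∘ Tuple.sort hA.eigenvalues

set_option maxHeartbeats 1000000 in
/-- For `X ∈ S_n`, a symmetric `G` with bottom eigen-gap at least `δX > 0`,
and `v` a unit eigenvector of `G` for the smallest eigenvalue,
`⟨X − vvᵀ, G⟩ ≥ δX(1 − vᵀXv) ≥ (δX/2)‖X − vvᵀ‖_F²`. -/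
theorem stmt3 {n : ℕ} (G X : Matrix (Fin (n+2)) (Fin (n+2)) ℝ)
    (hG : G.IsHermitian) (hX : X ∈ Spectra (n+2))
    (δX : ℝ) (hδpos : 0 < δX)
    (hgap : δX ≤ sortedEigs hG 1 - sortedEigs hG 0)
    (v : Fin (n+2) → ℝ) (hv : ∑ i, (v i)^2 = 1)
    (hev : G *ᵥ v = sortedEigs hG 0 • v) :
    tinner (X - vecMulVec v v) G ≥ δX * (1 - v ⬝ᵥ (X *ᵥ v)) ∧
    δX * (1 - v ⬝ᵥ (X *ᵥ v)) ≥ (δX / 2) * frobSq (X - vecMulVec v v) := by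
  obtain ⟨hXpsd, hXtr⟩ := hX
  have hXtr' : ∑ j, X j j = 1 := by simpa [Matrix.trace, Matrix.diag] using hXtr
  set μ : Fin (n+2) → ℝ := hG.eigenvalues with hμ
  set u : Fin (n+2) → Fin (n+2) → ℝ := fun i => ⇑(hG.eigenvectorBasis i) with hu
  -- orthonormality of columns
  have hUcol : ∀ i i' : Fin (n+2), ∑ j, u i j * u i' j = if i = i' then 1 else 0 := by
    intro i i'
    have h := hG.eigenvectorBasis.orthonormal
    rw [orthonormal_iff_ite] at h
    simpa [PiLp.inner_apply, RCLike.inner_apply, mul_comm] using h i i'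
  -- orthonormality of rows
  have hUrow : ∀ j k : Fin (n+2), ∑ i, u i j * u i k = if j = k then 1 else 0 := by
    intro j k
    have h : (hG.eigenvectorUnitary : Matrix (Fin (n+2)) (Fin (n+2)) ℝ) *
        star (hG.eigenvectorUnitary : Matrix (Fin (n+2)) (Fin (n+2)) ℝ) = 1 :=
      Matrix.mem_unitaryGroup_iff.mp hG.eigenvectorUnitary.2
    have h2 := (Matrix.ext_iff.2 h) j k
    simpa [mul_apply, one_apply, conjTranspose_apply,
      IsHermitian.eigenvectorUnitary_apply] using h2
  -- spectral decomposition entrywise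
  have hspec : ∀ j k, G j k = ∑ i, μ i * u i j * u i k := by
    intro j k
    conv_lhs => rw [hG.spectral_theorem]
    simp [mul_apply, diagonal, conjTranspose_apply, IsHermitian.eigenvectorUnitary_apply,
      Finset.sum_ite_eq, mul_comm]
    rfl
  set i0 : Fin (n+2) := Tuple.sort μ 0 with hi0
  have hL0 : sortedEigs hG 0 = μ i0 := rfl
  set lam : ℝ := μ i0 with hlam
  -- gap
  have hgap' : ∀ i, i ≠ i0 → lam + δX ≤ μ i := by
    intro i hi
    have hk : Tuple.sort μ ((Tuple.sort μ).symm i) = i := (Tuple.sort μ).apply_symm_apply i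
    have hk0 : (Tuple.sort μ).symm i ≠ 0 := by
      intro h; exact hi (by rw [← hk, h])
    have hkv : ((Tuple.sort μ).symm i).val ≠ 0 := by
      exact fun h => hk0 (Fin.ext (by rw [h]; rfl))
    have h1 : (1 : Fin (n+2)) ≤ (Tuple.sort μ).symm i := by
      rw [Fin.le_def, Fin.val_one]; omega
    have hmono := Tuple.monotone_sort μ h1
    have h2 : sortedEigs hG 1 ≤ μ i := by
      have : (μ ∘ Tuple.sort μ) ((Tuple.sort μ).symm i) = μ i := by simp [hk]
      rw [← this]; exact hmono
    have h3 : sortedEigs hG 0 = lam := hL0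
    linarith [hgap, h2, h3.symm.le]
  have hlampos : ∀ i, i ≠ i0 → lam < μ i := fun i hi => by
    have := hgap' i hi; linarith
  -- orthogonality of v to other eigenvectors
  have hGsymm : Gᵀ = G := by
    rw [← conjTranspose_eq_transpose_of_trivial]; exact hG
  have horth : ∀ i, i ≠ i0 → ∑ j, u i j * v j = 0 := by
    intro i hi
    have h1 : u i ⬝ᵥ (G *ᵥ v) = lam * ∑ j, u i j * v j := by
      rw [hev]
      simp only [dotProduct, Pi.smul_apply, smul_eq_mul, hL0, ← hlam, Finset.mul_sum]
      exact Finset.sum_congr rfl fun j _ => by ring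
    have h2 : u i ⬝ᵥ (G *ᵥ v) = μ i * ∑ j, u i j * v j := by
      rw [dotProduct_mulVec]
      have hvm : u i ᵥ* G = G *ᵥ u i := by rw [← mulVec_transpose, hGsymm]
      rw [hvm, hG.mulVec_eigenvectorBasis]
      simp only [dotProduct, Pi.smul_apply, smul_eq_mul, Finset.mul_sum]
      exact Finset.sum_congr rfl fun j _ => by ring
    have h3 : (lam - μ i) * ∑ j, u i j * v j = 0 := by
      rw [sub_mul, ← h1, ← h2]; ring
    have h4 : lam - μ i ≠ 0 := by have := hlampos i hi; linarith
    exact (mul_eq_zero.mp h3).resolve_left h4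
  -- expansion of v
  set c : ℝ := ∑ k, u i0 k * v k with hc
  have hexp : ∀ j, v j = c * u i0 j := by
    intro j
    have h1 : v j = ∑ i, (∑ k, u i k * v k) * u i j := by
      calc v j = ∑ k, (if j = k then 1 else 0) * v k := by simp
        _ = ∑ k, (∑ i, u i j * u i k) * v k := by
            exact Finset.sum_congr rfl fun k _ => by rw [hUrow j k]
        _ = ∑ k, ∑ i, u i j * u i k * v k := by
            exact Finset.sum_congr rfl fun k _ => by rw [Finset.sum_mul]
        _ = ∑ i, ∑ k, u i j * u i k * v k := Finset.sum_comm
        _ = ∑ i, (∑ k, u i k * v k) * u i j := by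
            refine Finset.sum_congr rfl fun i _ => ?_
            rw [Finset.sum_mul]
            exact Finset.sum_congr rfl fun k _ => by ring
    rw [h1]
    rw [Finset.sum_eq_single i0]
    · intro i _ hi; rw [horth i hi, zero_mul]
    · intro h; exact absurd (Finset.mem_univ i0) h
  have hc2 : c^2 = 1 := by
    have hnorm : ∑ j, u i0 j * u i0 j = 1 := by simpa using hUcol i0 i0
    calc c^2 = c^2 * ∑ j, u i0 j * u i0 j := by rw [hnorm, mul_one]
      _ = ∑ j, (c * u i0 j)^2 := by
          rw [Finset.mul_sum]; exact Finset.sum_congr rfl fun j _ => by ring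
      _ = ∑ j, (v j)^2 := by
          exact Finset.sum_congr rfl fun j _ => by rw [hexp j]
      _ = 1 := hv
  -- p i
  set p : Fin (n+2) → ℝ := fun i => ∑ j, ∑ k, u i j * (X j k * u i k) with hp
  have hp0 : ∀ i, 0 ≤ p i := by
    intro i
    have := hXpsd.dotProduct_mulVec_nonneg (u i)
    simpa [p, dotProduct, mulVec, Finset.mul_sum, star_trivial] using this
  have hpsum : ∑ i, p i = 1 := by
    have key : ∑ i, p i = ∑ j, ∑ k, X j k * ∑ i, u i j * u i k := by
      simp only [p]
      rw [Finset.sum_comm]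
      refine Finset.sum_congr rfl fun j _ => ?_
      rw [Finset.sum_comm]
      refine Finset.sum_congr rfl fun k _ => ?_
      rw [Finset.mul_sum]
      exact Finset.sum_congr rfl fun i _ => by ring
    rw [key]
    have : ∀ j : Fin (n+2), (∑ k, X j k * ∑ i, u i j * u i k) = X j j := by
      intro j
      have : ∀ k : Fin (n+2), X j k * ∑ i, u i j * u i k = if j = k then X j k else 0 := by
        intro k; rw [hUrow j k]; by_cases h : j = k <;> simp [h]
      rw [Finset.sum_congr rfl fun k _ => this k]
      simp
    rw [Finset.sum_congr rfl fun j _ => this j, hXtr']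
  -- vᵀXv = p i0
  have hvXv : v ⬝ᵥ (X *ᵥ v) = p i0 := by
    simp only [dotProduct, mulVec, Finset.mul_sum, p]
    calc ∑ j, ∑ k, v j * (X j k * v k)
        = ∑ j, ∑ k, c^2 * (u i0 j * (X j k * u i0 k)) := by
          refine Finset.sum_congr rfl fun j _ => Finset.sum_congr rfl fun k _ => ?_
          rw [hexp j, hexp k]; ring
      _ = c^2 * ∑ j, ∑ k, u i0 j * (X j k * u i0 k) := by
          rw [Finset.mul_sum]
          exact Finset.sum_congr rfl fun j _ => by rw [Finset.mul_sum]
      _ = ∑ j, ∑ k, u i0 j * (X j k * u i0 k) := by rw [hc2, one_mul]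
  -- tinner X G
  have hXG : tinner X G = ∑ i, μ i * p i := by
    simp only [tinner]
    calc ∑ j, ∑ k, X j k * G j k
        = ∑ j, ∑ k, ∑ i, μ i * (u i j * (X j k * u i k)) := by
          refine Finset.sum_congr rfl fun j _ => Finset.sum_congr rfl fun k _ => ?_
          rw [hspec j k, Finset.mul_sum]
          exact Finset.sum_congr rfl fun i _ => by ring
      _ = ∑ j, ∑ i, ∑ k, μ i * (u i j * (X j k * u i k)) :=
          Finset.sum_congr rfl fun j _ => Finset.sum_comm
      _ = ∑ i, ∑ j, ∑ k, μ i * (u i j * (X j k * u i k)) := Finset.sum_comm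
      _ = ∑ i, μ i * p i := by
          refine Finset.sum_congr rfl fun i _ => ?_
          simp only [p, Finset.mul_sum]
  -- tinner vvᵀ G
  have hvvG : tinner (vecMulVec v v) G = lam := by
    simp only [tinner, vecMulVec_apply]
    have hvv : ∑ j, v j * v j = 1 := by
      rw [← hv]; exact Finset.sum_congr rfl fun j _ => by ring
    calc ∑ j, ∑ k, v j * v k * G j k = ∑ j, v j * (G *ᵥ v) j := by
          refine Finset.sum_congr rfl fun j _ => ?_
          simp only [mulVec, dotProduct, Finset.mul_sum]
          exact Finset.sum_congr rfl fun k _ => by ring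
      _ = ∑ j, lam * (v j * v j) := by
          rw [hev]
          refine Finset.sum_congr rfl fun j _ => ?_
          simp only [Pi.smul_apply, smul_eq_mul, hL0, ← hlam]; ring
      _ = lam := by rw [← Finset.mul_sum, hvv, mul_one]
  -- linearity of tinner
  have hlin : tinner (X - vecMulVec v v) G = tinner X G - tinner (vecMulVec v v) G := by
    simp only [tinner, Matrix.sub_apply, sub_mul, Finset.sum_sub_distrib]
  -- main inequality 1
  have key1 : lam + δX * (1 - p i0) ≤ ∑ i, μ i * p i := by
    have h1 : ∀ i : Fin (n+2),
        (lam + δX) * p i - (if i = i0 then δX * p i else 0) ≤ μ i * p i := by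
      intro i
      by_cases h : i = i0
      · subst h
        rw [if_pos rfl]
        have hring : (lam + δX) * p i0 - δX * p i0 = lam * p i0 := by ring
        have hmu : μ i0 = lam := rfl
        rw [hring, hmu]
      · simp only [if_neg h, sub_zero]
        have h2 := hgap' i h
        have h3 := hp0 i
        nlinarith
    calc lam + δX * (1 - p i0)
        = ∑ i, ((lam + δX) * p i - (if i = i0 then δX * p i else 0)) := by
          rw [Finset.sum_sub_distrib, ← Finset.mul_sum, hpsum,
            Finset.sum_ite_eq' Finset.univ i0 (fun i => δX * p i)]
          simp; ring
      _ ≤ ∑ i, μ i * p i := Finset.sum_le_sum fun i _ => h1 i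
  have part1 : tinner (X - vecMulVec v v) G ≥ δX * (1 - v ⬝ᵥ (X *ᵥ v)) := by
    rw [hlin, hXG, hvvG, hvXv]
    linarith
  -- part 2
  set t : ℝ := v ⬝ᵥ (X *ᵥ v) with ht
  have ht' : t = ∑ j, ∑ k, v j * (X j k * v k) := by
    simp only [ht, dotProduct, mulVec, Finset.mul_sum]
  have hfd : frobSq (X - vecMulVec v v) = frobSq X - 2*t + 1 := by
    simp only [frobSq, Matrix.sub_apply, vecMulVec_apply]
    have hsq : ∀ j k : Fin (n+2), (X j k - v j * v k)^2
        = (X j k)^2 - 2*(v j * (X j k * v k)) + (v j)^2*(v k)^2 := fun j k => by ring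
    calc ∑ j, ∑ k, (X j k - v j * v k)^2
        = ∑ j, ∑ k, ((X j k)^2 - 2*(v j * (X j k * v k)) + (v j)^2*(v k)^2) := by
          exact Finset.sum_congr rfl fun j _ => Finset.sum_congr rfl fun k _ => hsq j k
      _ = (∑ j, ∑ k, (X j k)^2) - 2*(∑ j, ∑ k, v j * (X j k * v k))
            + ∑ j, ∑ k, (v j)^2*(v k)^2 := by
          simp only [Finset.sum_add_distrib, Finset.sum_sub_distrib, ← Finset.mul_sum]
      _ = (∑ j, ∑ k, (X j k)^2) - 2*t + 1 := by
          rw [← ht']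
          congr 1
          calc ∑ j, ∑ k, (v j)^2*(v k)^2 = (∑ j, (v j)^2) * ∑ k, (v k)^2 := by
                rw [Finset.sum_mul_sum]
            _ = 1 := by rw [hv, one_mul]
  have hentry : ∀ j k, (X j k)^2 ≤ X j j * X k k := by
    intro j k
    by_cases hjk : j = k
    · subst hjk; rw [sq]
    · have hXs : X k j = X j k := by
        have := hXpsd.1.apply j k
        simpa using this
      have hq : ∀ s : ℝ, 0 ≤ X k k * (s*s) + (2 * X j k) * s + X j j := by
        intro s
        set w : Fin (n+2) → ℝ := (Pi.single j (1:ℝ) : Fin (n+2) → ℝ) + s • (Pi.single k (1:ℝ) : Fin (n+2) → ℝ) with hwdef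
        have h := hXpsd.dotProduct_mulVec_nonneg w
        have hw : star w ⬝ᵥ (X *ᵥ w)
            = X k k * (s*s) + (2 * X j k) * s + X j j := by
          rw [hwdef]
          rw [star_trivial]
          rw [mulVec_add, mulVec_smul, add_dotProduct, smul_dotProduct,
            dotProduct_add, dotProduct_add, dotProduct_smul, dotProduct_smul]
          simp only [mulVec_single_one, col_apply, single_dotProduct, smul_eq_mul, mul_one]
          rw [hXs]; ring
        rw [hw] at h; exact h
      have hd := discrim_le_zero hq
      simp only [discrim] at hd
      nlinarith
  have hfX : frobSq X ≤ 1 := by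
    calc frobSq X = ∑ j, ∑ k, (X j k)^2 := rfl
      _ ≤ ∑ j, ∑ k, X j j * X k k :=
          Finset.sum_le_sum fun j _ => Finset.sum_le_sum fun k _ => hentry j k
      _ = (∑ j, X j j) * ∑ k, X k k := by rw [Finset.sum_mul_sum]
      _ = 1 := by rw [hXtr', one_mul]
  have part2 : δX * (1 - t) ≥ (δX / 2) * frobSq (X - vecMulVec v v) := by
    rw [hfd]
    nlinarith [hfX, hδpos.le]
  exact ⟨part1, part2⟩
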